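/- Under the hypotheses of the previous setup (finite sets $A_k$ with $\max A_{k+1} \le \frac14 d(A_k)$), if $x_i, y_i \in A_i$ with $x_i = y_i$ for $i < k$ and $x_k \ne y_k$, then for every $i$ with $k+1 \le i \le n$ one has $|x_i|, |y_i| \le \frac{|x_k - y_k|}{2^{i-k+1}}$. -/
import Mathlib


/-- Minimal gap of a finite set: min distance between distinct points if `2 ≤ card`,
and `|x|` for a singleton `{x}`. -/
noncomputable def dGap (A : Finset ℝ) : ℝ :=
  if 2 ≤ A.card then sInf {r : ℝ | ∃ x ∈ A, ∃ y ∈ A, x ≠ y ∧ r = |x - y|}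
  else sInf {r : ℝ | ∃ x ∈ A, r = |x|}

/-- `max A = max_{a ∈ A} |a|`. -/
noncomputable def maxAbs (A : Finset ℝ) : ℝ := sSup {r : ℝ | ∃ x ∈ A, r = |x|}

lemma absSet_eq (A : Finset ℝ) :
    {r : ℝ | ∃ x ∈ A, r = |x|} = ↑(A.image (fun x => |x|)) := by
  ext r; simp [eq_comm]

lemma le_maxAbs {A : Finset ℝ} {a : ℝ} (ha : a ∈ A) : |a| ≤ maxAbs A := by
  rw [maxAbs, absSet_eq]
  exact le_csSup (A.image (fun x => |x|)).finite_toSet.bddAbove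
    (by simp; exact ⟨a, ha, rfl⟩)

lemma dGap_le_dist {A : Finset ℝ} {a b : ℝ} (ha : a ∈ A) (hb : b ∈ A) (hab : a ≠ b) :
    dGap A ≤ |a - b| := by
  have hcard : 2 ≤ A.card := Finset.one_lt_card.mpr ⟨a, ha, b, hb, hab⟩
  rw [dGap, if_pos hcard]
  refine csInf_le ⟨0, ?_⟩ ⟨a, ha, b, hb, hab, rfl⟩
  rintro r ⟨u, -, v, -, -, rfl⟩
  exact abs_nonneg _

lemma dGap_le_two_maxAbs {A : Finset ℝ} (hA : A.Nonempty) : dGap A ≤ 2 * maxAbs A := by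
  by_cases hcard : 2 ≤ A.card
  · obtain ⟨a, ha, b, hb, hab⟩ := Finset.one_lt_card.mp hcard
    calc dGap A ≤ |a - b| := dGap_le_dist ha hb hab
    _ ≤ |a| + |b| := abs_sub _ _
    _ ≤ maxAbs A + maxAbs A := add_le_add (le_maxAbs ha) (le_maxAbs hb)
    _ = 2 * maxAbs A := by ring
  · obtain ⟨a, ha⟩ := hA
    have h1 : dGap A = sInf {r : ℝ | ∃ x ∈ A, r = |x|} := by rw [dGap, if_neg hcard]
    have h2 : dGap A ≤ |a| := by
      rw [h1]
      refine csInf_le ⟨0, ?_⟩ ⟨a, ha, rfl⟩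
      rintro r ⟨u, -, rfl⟩; exact abs_nonneg _
    have h3 := le_maxAbs ha
    have h4 : (0:ℝ) ≤ maxAbs A := le_trans (abs_nonneg a) h3
    linarith

theorem stmt1 (A : ℕ → Finset ℝ)
    (hne : ∀ k, (A k).Nonempty)
    (h0 : ∀ k, ∀ a ∈ A k, a ≠ 0)
    (hmax : ∀ k, maxAbs (A (k + 1)) ≤ dGap (A k) / 4)
    (n : ℕ) (x y : ℕ → ℝ)
    (hx : ∀ i < n, x i ∈ A i) (hy : ∀ i < n, y i ∈ A i)
    (k : ℕ) (hk : k < n)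
    (heq : ∀ i < k, x i = y i) (hneq : x k ≠ y k) :
    ∀ i, k < i → i < n → |x i| ≤ |x k - y k| / 2 ^ (i - k + 1) ∧
      |y i| ≤ |x k - y k| / 2 ^ (i - k + 1) := by
  have hdk : dGap (A k) ≤ |x k - y k| := dGap_le_dist (hx k hk) (hy k hk) hneq
  have key : ∀ m : ℕ, maxAbs (A (k + 1 + m)) ≤ |x k - y k| / 2 ^ (m + 2) := by
    intro m
    induction m with
    | zero =>
      calc maxAbs (A (k + 1 + 0)) ≤ dGap (A k) / 4 := hmax k
      _ ≤ |x k - y k| / 2 ^ (0 + 2) := by norm_num; linarith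
    | succ m ih =>
      have h1 : maxAbs (A (k + 1 + m + 1)) ≤ dGap (A (k + 1 + m)) / 4 := hmax _
      have h2 : dGap (A (k + 1 + m)) ≤ 2 * maxAbs (A (k + 1 + m)) :=
        dGap_le_two_maxAbs (hne _)
      have : k + 1 + (m + 1) = k + 1 + m + 1 := by ring
      rw [this]
      have hpow : (2:ℝ) ^ (m + 1 + 2) = 2 * 2 ^ (m + 2) := by ring
      rw [hpow]
      have hp : (0:ℝ) < 2 ^ (m + 2) := by positivity
      rw [le_div_iff₀ hp] at ih
      rw [le_div_iff₀ (by positivity : (0:ℝ) < 2 * 2 ^ (m + 2))]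
      nlinarith
  intro i hki hin
  obtain ⟨m, rfl⟩ : ∃ m, i = k + 1 + m := ⟨i - k - 1, by omega⟩
  have him : k + 1 + m - k + 1 = m + 2 := by omega
  rw [him]
  have hxi := le_maxAbs (hx _ hin)
  have hyi := le_maxAbs (hy _ hin)
  exact ⟨le_trans hxi (key m), le_trans hyi (key m)⟩
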